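/- Let p be an odd prime, q = p^r, and n a positive integer with p ∤ n and p ∤ (n−1). Then there exists an integer i with 1 ≤ i ≤ q−1 and gcd(i,p) = 1 such that ⌊ni/q⌋ and n−1 are relatively prime. -/

import Mathlib

/-- `p` an odd prime, `q = p^r`, `n` positive with `p ∤ n` and
`p ∤ (n-1)`. Then there is `i` with `1 ≤ i ≤ q-1`, `gcd(i,p) = 1` and
`gcd(⌊n i/q⌋, n-1) = 1`. -/
theorem stmt3 (p r n : ℕ) (hp : p.Prime) (hodd : Odd p) (hr : 1 ≤ r)
    (hn : 0 < n) (hpn : ¬ p ∣ n) (hpn1 : ¬ p ∣ (n - 1)) :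
    ∃ i : ℕ, 1 ≤ i ∧ i ≤ p ^ r - 1 ∧ Nat.gcd i p = 1 ∧
      Nat.gcd (n * i / p ^ r) (n - 1) = 1 := by
  have hq1 : 1 < p ^ r := Nat.one_lt_pow (by omega) hp.one_lt
  have hq : 0 < p ^ r := by omega
  haveI : NeZero (p ^ r) := ⟨by omega⟩
  haveI : Fact (1 < p ^ r) := ⟨hq1⟩
  have hn2 : 2 ≤ n := by
    rcases Nat.lt_or_ge n 2 with h | h
    · interval_cases n
      exact absurd (by simp) hpn1
    · exact h
  -- n - 1 is coprime to p^r
  have hcop : Nat.Coprime (n - 1) (p ^ r) :=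
    Nat.Coprime.pow_right r (((Nat.Prime.coprime_iff_not_dvd hp).mpr hpn1).symm)
  set x : ZMod (p ^ r) := ((n - 1 : ℕ) : ZMod (p ^ r)) with hx_def
  have hx : IsUnit x := (ZMod.isUnit_iff_coprime _ _).mpr hcop
  set y : ZMod (p ^ r) := -x⁻¹ with hy_def
  have hyu : IsUnit y := by
    refine IsUnit.of_mul_eq_one (-x) ?_
    rw [hy_def, neg_mul_neg, ZMod.inv_mul_of_unit x hx]
  set i : ℕ := y.val with hi_def
  have hcast : ((i : ℕ) : ZMod (p ^ r)) = y := by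
    rw [hi_def, ZMod.natCast_val, ZMod.cast_id]
  have hilt : i < p ^ r := ZMod.val_lt y
  have hipos : 1 ≤ i := by
    rcases Nat.eq_zero_or_pos i with h0 | h
    · exfalso
      have : y = 0 := by rw [← hcast, h0, Nat.cast_zero]
      exact hyu.ne_zero this
    · exact h
  -- key divisibility : p^r ∣ (n-1)*i + 1
  have hdvd : p ^ r ∣ (n - 1) * i + 1 := by
    rw [← ZMod.natCast_eq_zero_iff]
    push_cast
    rw [hcast, ← hx_def, hy_def]
    rw [mul_neg, ZMod.mul_inv_of_unit x hx]
    ring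
  obtain ⟨k, hk⟩ := hdvd
  have e2 : n * i = (n - 1) * i + i := by
    have : n - 1 + 1 = n := by omega
    calc n * i = (n - 1 + 1) * i := by rw [this]
    _ = (n - 1) * i + i := by ring
  have e3 : n * i = p ^ r * k + (i - 1) := by
    set A := (n - 1) * i
    set B := p ^ r * k
    set C := n * i
    omega
  have hdiv : n * i / p ^ r = k := by
    rw [e3, Nat.mul_add_div hq, Nat.div_eq_of_lt (by omega), add_zero]
  refine ⟨i, hipos, by omega, ?_, ?_⟩
  · -- gcd i p = 1
    have hiu : IsUnit ((i : ℕ) : ZMod (p ^ r)) := by rw [hcast]; exact hyu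
    have : Nat.Coprime i (p ^ r) := (ZMod.isUnit_iff_coprime _ _).mp hiu
    exact (Nat.coprime_pow_right_iff (by omega : 0 < r) i p).mp this
  · -- gcd (n*i/p^r) (n-1) = 1
    rw [hdiv]
    have h1 : Nat.gcd k (n - 1) ∣ p ^ r * k := Dvd.dvd.mul_left (Nat.gcd_dvd_left _ _) _
    have h2 : Nat.gcd k (n - 1) ∣ (n - 1) * i := Dvd.dvd.mul_right (Nat.gcd_dvd_right _ _) _
    have h3 : Nat.gcd k (n - 1) ∣ 1 := by
      have := Nat.dvd_sub h1 h2
      rwa [← hk, Nat.add_sub_cancel_left] at this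
    exact Nat.dvd_one.mp h3
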